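/- arXiv:2305.12076 — 2 statements merged into one kernel-verified Lean document; each statement's English description precedes it below -/
import Mathlib

section
/- Let C ⊆ ℝ^n be nonempty, closed and convex, let g, h : ℝ^n → ℝ be differentiable with g ρ_g-convex on C and h ρ_h-convex on C (ρ_g, ρ_h ≥ 0, ρ_g + ρ_h > 0), set f = g − h, and let ᾱ > 0 and γ ∈ [0, (ρ_g + ρ_h)/(1 + (1+ᾱ)²)). Let sequences (x^k)_{k≥0}, (z^k)_{k≥0} in ℝ^n and (α_k)_{k≥0} in ℝ satisfy, with x^{−1} := x^0 and for every k ≥ 0: (a) z^k ∈ C and z^k minimizes u ↦ g(u) − ⟨∇h(x^k) + γ(x^k − x^{k−1}), u⟩ over C; (b) α_k ∈ [0, ᾱ]; (c) x^{k+1} = z^k + α_k(z^k − x^k); (d) x^{k+1} ∈ C; (e) f(x^{k+1}) ≤ f(z^k). If inf{f(u) : u ∈ C} > −∞, then Σ_{k≥1} ‖x^k − x^{k−1}‖² < ∞; in particular ‖x^k − x^{k−1}‖ → 0 and ‖z^k − x^k‖ → 0 as k → ∞. -/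
open scoped RealInnerProductSpace
open Filter Topology

set_option linter.unusedSectionVars false

variable {E : Type*} [NormedAddCommGroup E] [InnerProductSpace ℝ E] [CompleteSpace E]

/-- combination inequality for ρ-convex functions -/
lemma comb_ineq {C : Set E} {φ : E → ℝ} {ρ : ℝ}
    (hconv : ConvexOn ℝ C (fun u => φ u - ρ / 2 * ‖u‖ ^ 2))
    {p q : E} (hp : p ∈ C) (hq : q ∈ C) {t : ℝ} (ht0 : 0 ≤ t) (ht1 : t ≤ 1) :
    φ (p + t • (q - p)) ≤ φ p + t * (φ q - φ p) - ρ / 2 * (t * (1 - t)) * ‖q - p‖ ^ 2 := by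
  have h := hconv.2 hp hq (by linarith : (0:ℝ) ≤ 1 - t) ht0 (by ring)
  have hpt : (1 - t) • p + t • q = p + t • (q - p) := by
    rw [smul_sub, sub_smul, one_smul]; abel
  rw [hpt] at h
  simp only [smul_eq_mul] at h
  have key : ‖p + t • (q - p)‖ ^ 2
      = (1 - t) * ‖p‖ ^ 2 + t * ‖q‖ ^ 2 - t * (1 - t) * ‖q - p‖ ^ 2 := by
    have h1 := norm_add_sq_real p (t • (q - p))
    have h2 := norm_add_sq_real p (q - p)
    have h3 : p + (q - p) = q := by abel
    rw [h3] at h2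
    rw [inner_smul_right, norm_smul, Real.norm_eq_abs, abs_of_nonneg ht0] at h1
    rw [h1]; rw [h2]; ring
  rw [key] at h
  nlinarith [h]

/-- strong minimality for ρ-convex minimizers -/
lemma min_strong {C : Set E} (hCcv : Convex ℝ C) {φ : E → ℝ} {ρ : ℝ}
    (hconv : ConvexOn ℝ C (fun u => φ u - ρ / 2 * ‖u‖ ^ 2))
    {zz : E} (hz : zz ∈ C) (hmin : ∀ u ∈ C, φ zz ≤ φ u)
    {u : E} (hu : u ∈ C) :
    φ zz + ρ / 2 * ‖u - zz‖ ^ 2 ≤ φ u := by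
  have hstep : ∀ m : ℕ, φ zz + ρ / 2 * (1 - 1 / (m + 1)) * ‖u - zz‖ ^ 2 ≤ φ u := by
    intro m
    set t : ℝ := 1 / (m + 1) with ht
    have htpos : 0 < t := by positivity
    have ht1 : t ≤ 1 := by
      rw [ht, div_le_one (by positivity)]; simp
    have hmem : zz + t • (u - zz) ∈ C := by
      have := hCcv hz hu (by linarith : (0:ℝ) ≤ 1 - t) htpos.le (by ring)
      have hpt : (1 - t) • zz + t • u = zz + t • (u - zz) := by
        rw [smul_sub, sub_smul, one_smul]; abel
      rwa [hpt] at this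
    have h1 := comb_ineq hconv hz hu htpos.le ht1
    have h2 := hmin _ hmem
    have h3 : ρ / 2 * (t * (1 - t)) * ‖u - zz‖ ^ 2 ≤ t * (φ u - φ zz) := by linarith
    have h4 : t * (ρ / 2 * (1 - t) * ‖u - zz‖ ^ 2) ≤ t * (φ u - φ zz) := by
      calc t * (ρ / 2 * (1 - t) * ‖u - zz‖ ^ 2)
          = ρ / 2 * (t * (1 - t)) * ‖u - zz‖ ^ 2 := by ring
        _ ≤ t * (φ u - φ zz) := h3
    have h5 := (mul_le_mul_iff_right₀ htpos).mp h4
    linarith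
  have hlim : Tendsto (fun m : ℕ => φ zz + ρ / 2 * (1 - 1 / (m + 1)) * ‖u - zz‖ ^ 2)
      atTop (𝓝 (φ zz + ρ / 2 * (1 - 0) * ‖u - zz‖ ^ 2)) := by
    exact tendsto_const_nhds.add
      (((tendsto_const_nhds.sub tendsto_one_div_add_atTop_nhds_zero_nat).const_mul _).mul
        tendsto_const_nhds)
  have := le_of_tendsto hlim (Eventually.of_forall hstep)
  simpa using this

/-- gradient inequality for ρ-convex differentiable functions -/
lemma grad_ineq {C : Set E} {ψ : E → ℝ} {ρ : ℝ}
    (hconv : ConvexOn ℝ C (fun u => ψ u - ρ / 2 * ‖u‖ ^ 2))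
    {p q : E} (hp : p ∈ C) (hq : q ∈ C) {gp : E} (hgrad : HasGradientAt ψ gp p) :
    ⟪gp, q - p⟫ + ρ / 2 * ‖q - p‖ ^ 2 ≤ ψ q - ψ p := by
  set L : ℝ → ℝ := fun t => ψ (p + t • (q - p)) with hL
  have hline : HasDerivAt (fun t : ℝ => p + t • (q - p)) (q - p) 0 := by
    simpa using ((hasDerivAt_id (0:ℝ)).smul_const (q - p)).const_add p
  have hf := hgrad.hasFDerivAt
  have hLd : HasDerivAt L ⟪gp, q - p⟫ 0 := by
    have hf' : HasFDerivAt ψ ((InnerProductSpace.toDual ℝ E) gp) (p + (0:ℝ) • (q - p)) := by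
      simpa using hf
    have := hf'.comp_hasDerivAt 0 hline
    simpa [hL, InnerProductSpace.toDual_apply_apply, Function.comp_def] using this
  have t1 : Tendsto (slope L 0) (𝓝[>] (0:ℝ)) (𝓝 ⟪gp, q - p⟫) :=
    (hasDerivAt_iff_tendsto_slope.mp hLd).mono_left
      (nhdsWithin_mono 0 (fun t ht => ne_of_gt ht))
  have t2 : Tendsto (fun t : ℝ => ψ q - ψ p - ρ / 2 * (1 - t) * ‖q - p‖ ^ 2)
      (𝓝[>] (0:ℝ)) (𝓝 (ψ q - ψ p - ρ / 2 * (1 - 0) * ‖q - p‖ ^ 2)) := by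
    apply Tendsto.mono_left _ nhdsWithin_le_nhds
    exact tendsto_const_nhds.sub
      (((tendsto_const_nhds.sub tendsto_id).const_mul _).mul tendsto_const_nhds)
  have ev : ∀ᶠ t in 𝓝[>] (0:ℝ),
      slope L 0 t ≤ ψ q - ψ p - ρ / 2 * (1 - t) * ‖q - p‖ ^ 2 := by
    filter_upwards [Ioc_mem_nhdsGT (by norm_num : (0:ℝ) < 1)] with t ht
    have h1 := comb_ineq hconv hp hq ht.1.le ht.2
    have hL0 : L 0 = ψ p := by simp [hL]
    rw [slope_def_field, hL0, sub_zero, div_le_iff₀ ht.1]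
    nlinarith [h1]
  have := le_of_tendsto_of_tendsto t1 t2 ev
  simp only [sub_zero, mul_one] at this
  linarith

set_option maxHeartbeats 1000000 in
set_option maxHeartbeats 1000000 in
/-- Square-summability of successive steps of HDCA-LI
(Theorem 2.4, second item). `x (k-1)` uses truncated subtraction on `ℕ`,
so `x (0-1) = x 0`, encoding the convention `x⁻¹ := x⁰`. Note that
`Σ_{k≥1} ‖x^k − x^{k−1}‖² = Σ_{k≥0} ‖x^{k+1} − x^k‖²`. -/
theorem stmt2 {n : ℕ} (C : Set (EuclideanSpace ℝ (Fin n)))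
    (hCne : C.Nonempty) (hCcl : IsClosed C) (hCcv : Convex ℝ C)
    (g h : EuclideanSpace ℝ (Fin n) → ℝ)
    (g' h' : EuclideanSpace ℝ (Fin n) → EuclideanSpace ℝ (Fin n))
    (hg : ∀ u, HasGradientAt g (g' u) u) (hh : ∀ u, HasGradientAt h (h' u) u)
    (ρg ρh : ℝ) (hρg : 0 ≤ ρg) (hρh : 0 ≤ ρh) (hρ : 0 < ρg + ρh)
    (hgconv : ConvexOn ℝ C (fun u => g u - ρg / 2 * ‖u‖ ^ 2))
    (hhconv : ConvexOn ℝ C (fun u => h u - ρh / 2 * ‖u‖ ^ 2))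
    (abar γ : ℝ) (habar : 0 < abar) (hγ0 : 0 ≤ γ)
    (hγ1 : γ < (ρg + ρh) / (1 + (1 + abar) ^ 2))
    (x z : ℕ → EuclideanSpace ℝ (Fin n)) (α : ℕ → ℝ)
    (hzC : ∀ k, z k ∈ C)
    (hmin : ∀ k, ∀ u ∈ C,
      g (z k) - ⟪h' (x k) + γ • (x k - x (k - 1)), z k⟫ ≤
        g u - ⟪h' (x k) + γ • (x k - x (k - 1)), u⟫)
    (hα : ∀ k, α k ∈ Set.Icc (0 : ℝ) abar)
    (hupd : ∀ k, x (k + 1) = z k + α k • (z k - x k))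
    (hxC : ∀ k, x (k + 1) ∈ C)
    (hdec : ∀ k, g (x (k + 1)) - h (x (k + 1)) ≤ g (z k) - h (z k))
    (hbdd : ∃ m : ℝ, ∀ u ∈ C, m ≤ g u - h u) :
    Summable (fun k : ℕ => ‖x (k + 1) - x k‖ ^ 2) ∧
      Tendsto (fun k : ℕ => ‖x k - x (k - 1)‖) atTop (𝓝 0) ∧
      Tendsto (fun k : ℕ => ‖z k - x k‖) atTop (𝓝 0) := by
  obtain ⟨m, hm⟩ := hbdd
  set A : ℝ := (1 + abar) ^ 2 with hA
  have hApos : 0 < A := by positivity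
  set c : ℝ := (ρg + ρh - γ) / (2 * A) with hc
  set δ : ℝ := c - γ / 2 with hδ
  have hγA : γ * (1 + A) < ρg + ρh := (lt_div_iff₀ (by positivity)).mp hγ1
  have hργ : 0 ≤ ρg + ρh - γ := by nlinarith
  have hcnn : 0 ≤ c := by positivity
  have hcA : c * A = (ρg + ρh - γ) / 2 := by
    rw [hc, div_mul_eq_mul_div, mul_div_mul_right _ _ hApos.ne']
  have hδpos : 0 < δ := by
    rw [hδ, hc, sub_pos, div_lt_div_iff₀ two_pos (by positivity)]
    nlinarith
  -- step inequality
  have key : ∀ k : ℕ, g (x (k + 2)) - h (x (k + 2)) + γ / 2 * ‖x (k + 2) - x (k + 1)‖ ^ 2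
      + δ * ‖x (k + 2) - x (k + 1)‖ ^ 2
      ≤ g (x (k + 1)) - h (x (k + 1)) + γ / 2 * ‖x (k + 1) - x k‖ ^ 2 := by
    intro k
    set v : EuclideanSpace ℝ (Fin n) := h' (x (k + 1)) + γ • (x (k + 1) - x k) with hv
    -- minimization property at step k+1
    have hmin' : ∀ u ∈ C, g (z (k + 1)) - ⟪v, z (k + 1)⟫ ≤ g u - ⟪v, u⟫ := by
      have := hmin (k + 1)
      simpa [hv, Nat.add_sub_cancel] using this
    -- convexity of φ := g - ⟪v,·⟫ minus ρg/2‖·‖²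
    have hlin : ConvexOn ℝ C (fun u => -⟪v, u⟫) := by
      refine ⟨hCcv, fun a ha b hb s t hs ht hst => le_of_eq ?_⟩
      simp only [inner_add_right, inner_smul_right, smul_eq_mul]
      ring
    have hφconv : ConvexOn ℝ C (fun u => (g u - ⟪v, u⟫) - ρg / 2 * ‖u‖ ^ 2) := by
      have h1 : (fun u => (g u - ⟪v, u⟫) - ρg / 2 * ‖u‖ ^ 2)
          = fun u => (g u - ρg / 2 * ‖u‖ ^ 2) + (-⟪v, u⟫) := by funext u; ring
      rw [h1]; exact hgconv.add hlin
    have hstep1 := min_strong hCcv hφconv (hzC (k + 1)) hmin' (hxC k)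
    -- hstep1 : g (z (k+1)) - ⟪v, z (k+1)⟫ + ρg/2 ‖x (k+1) - z (k+1)‖² ≤ g (x (k+1)) - ⟪v, x (k+1)⟫
    have hstep2 := grad_ineq hhconv (hxC k) (hzC (k + 1)) (hh (x (k + 1)))
    -- inner product decomposition
    have hinner : ⟪v, z (k + 1)⟫ - ⟪v, x (k + 1)⟫
        = ⟪h' (x (k + 1)), z (k + 1) - x (k + 1)⟫
          + γ * ⟪x (k + 1) - x k, z (k + 1) - x (k + 1)⟫ := by
      rw [← inner_sub_right, hv, inner_add_left, real_inner_smul_left]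
    have hns : ‖x (k + 1) - z (k + 1)‖ = ‖z (k + 1) - x (k + 1)‖ := norm_sub_rev _ _
    -- abbreviations
    set e : EuclideanSpace ℝ (Fin n) := z (k + 1) - x (k + 1) with he
    set dk : EuclideanSpace ℝ (Fin n) := x (k + 1) - x k with hdk
    have hfz : g (z (k + 1)) - h (z (k + 1))
        ≤ g (x (k + 1)) - h (x (k + 1)) + γ * ⟪dk, e⟫ - (ρg + ρh) / 2 * ‖e‖ ^ 2 := by
      rw [hns] at hstep1
      linarith [hstep1, hstep2, hinner]
    have hCS : γ * ⟪dk, e⟫ ≤ γ / 2 * ‖dk‖ ^ 2 + γ / 2 * ‖e‖ ^ 2 := by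
      nlinarith [real_inner_le_norm dk e, sq_nonneg (‖dk‖ - ‖e‖), norm_nonneg dk, norm_nonneg e]
    -- relation between d(k+1) and e
    have hαk := hα (k + 1)
    have hde : x (k + 2) - x (k + 1) = (1 + α (k + 1)) • e := by
      rw [hupd (k + 1), he, add_smul, one_smul, smul_sub]
      abel
    have hnde : ‖x (k + 2) - x (k + 1)‖ ^ 2 = (1 + α (k + 1)) ^ 2 * ‖e‖ ^ 2 := by
      rw [hde, norm_smul, Real.norm_eq_abs, abs_of_nonneg (by linarith [hαk.1]), mul_pow]
    have hdebound : ‖x (k + 2) - x (k + 1)‖ ^ 2 ≤ A * ‖e‖ ^ 2 := by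
      rw [hnde, hA]
      have : (1 + α (k + 1)) ^ 2 ≤ (1 + abar) ^ 2 := by nlinarith [hαk.1, hαk.2]
      nlinarith [sq_nonneg ‖e‖]
    have hcbound : c * ‖x (k + 2) - x (k + 1)‖ ^ 2 ≤ (ρg + ρh - γ) / 2 * ‖e‖ ^ 2 := by
      calc c * ‖x (k + 2) - x (k + 1)‖ ^ 2 ≤ c * (A * ‖e‖ ^ 2) :=
            mul_le_mul_of_nonneg_left hdebound hcnn
        _ = (c * A) * ‖e‖ ^ 2 := by ring
        _ = (ρg + ρh - γ) / 2 * ‖e‖ ^ 2 := by rw [hcA]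
    have hd := hdec (k + 1)
    have hγδ : γ / 2 * ‖x (k + 2) - x (k + 1)‖ ^ 2 + δ * ‖x (k + 2) - x (k + 1)‖ ^ 2
        = c * ‖x (k + 2) - x (k + 1)‖ ^ 2 := by rw [hδ]; ring
    linarith [hfz, hCS, hcbound, hd]
  -- Lyapunov sequence
  set En : ℕ → ℝ := fun k => (g (x (k + 1)) - h (x (k + 1))) + γ / 2 * ‖x (k + 1) - x k‖ ^ 2
    with hEn
  have hEmono : ∀ k, En (k + 1) + δ * ‖x (k + 2) - x (k + 1)‖ ^ 2 ≤ En k := by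
    intro k; exact key k
  have hElb : ∀ k, m ≤ En k := by
    intro k
    have h1 := hm _ (hxC k)
    have h2 : 0 ≤ γ / 2 * ‖x (k + 1) - x k‖ ^ 2 := by positivity
    simp only [hEn]; linarith
  have hsumbound : ∀ N : ℕ,
      δ * (Finset.range N).sum (fun j => ‖x (j + 2) - x (j + 1)‖ ^ 2) ≤ En 0 - En N := by
    intro N
    induction N with
    | zero => simp
    | succ N ih =>
      rw [Finset.sum_range_succ]
      have := hEmono N
      linarith
  have hsum1 : Summable (fun j : ℕ => ‖x (j + 2) - x (j + 1)‖ ^ 2) := by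
    apply summable_of_sum_range_le (c := (En 0 - m) / δ) (fun j => by positivity)
    intro N
    rw [le_div_iff₀ hδpos]
    have := hsumbound N
    have := hElb N
    linarith [mul_comm δ ((Finset.range N).sum (fun j => ‖x (j + 2) - x (j + 1)‖ ^ 2))]
  have hsum : Summable (fun k : ℕ => ‖x (k + 1) - x k‖ ^ 2) := by
    have : (fun j : ℕ => ‖x (j + 2) - x (j + 1)‖ ^ 2)
        = fun j : ℕ => (fun k : ℕ => ‖x (k + 1) - x k‖ ^ 2) (j + 1) := by
      funext j; ring_nf
    rw [this] at hsum1
    exact (summable_nat_add_iff 1).mp hsum1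
  refine ⟨hsum, ?_, ?_⟩
  · -- ‖x k - x (k-1)‖ → 0
    have h0 : Tendsto (fun k : ℕ => ‖x (k + 1) - x k‖ ^ 2) atTop (𝓝 0) :=
      hsum.tendsto_atTop_zero
    have h1 : Tendsto (fun k : ℕ => ‖x (k + 1) - x k‖) atTop (𝓝 0) := by
      have := (Real.continuous_sqrt.tendsto 0).comp h0
      simpa [Function.comp_def, Real.sqrt_sq (norm_nonneg _)] using this
    have h2 : Tendsto (fun k : ℕ => ‖x ((k - 1) + 1) - x (k - 1)‖) atTop (𝓝 0) :=
      h1.comp (tendsto_sub_atTop_nat 1)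
    apply h2.congr'
    filter_upwards [eventually_ge_atTop 1] with k hk
    have hk' : k - 1 + 1 = k := by omega
    rw [hk']
  · -- ‖z k - x k‖ → 0
    have h0 : Tendsto (fun k : ℕ => ‖x (k + 1) - x k‖ ^ 2) atTop (𝓝 0) :=
      hsum.tendsto_atTop_zero
    have h1 : Tendsto (fun k : ℕ => ‖x (k + 1) - x k‖) atTop (𝓝 0) := by
      have := (Real.continuous_sqrt.tendsto 0).comp h0
      simpa [Function.comp_def, Real.sqrt_sq (norm_nonneg _)] using this
    have hle : ∀ k : ℕ, ‖z k - x k‖ ≤ ‖x (k + 1) - x k‖ := by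
      intro k
      have hαk := hα k
      have hde : x (k + 1) - x k = (1 + α k) • (z k - x k) := by
        rw [hupd k, add_smul, one_smul, smul_sub]; abel
      rw [hde, norm_smul, Real.norm_eq_abs, abs_of_nonneg (by linarith [hαk.1])]
      nlinarith [norm_nonneg (z k - x k), hαk.1]
    exact squeeze_zero (fun k => norm_nonneg _) hle h1
end

section
/- Let C ⊆ ℝ^n be nonempty, closed and convex, let g, h : ℝ^n → ℝ be differentiable with g ρ_g-convex on C and h ρ_h-convex on C (ρ_g, ρ_h ≥ 0), and set f = g − h. Let γ ≥ 0, let v ∈ C and x, x⁻ ∈ ℝ^n, and suppose x⁺ ∈ C minimizes u ↦ g(u) − ⟨∇h(v) + γ(x − x⁻), u⟩ over C. Then f(x⁺) + ((ρ_g + ρ_h − γ)/2)·‖v − x⁺‖² ≤ f(v) + (γ/2)·‖x − x⁻‖². -/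
open scoped RealInnerProductSpace
open Set Filter Topology

section helpers
variable {E : Type*} [NormedAddCommGroup E] [InnerProductSpace ℝ E] [CompleteSpace E]

omit [CompleteSpace E] in
lemma combo_norm_sq (t : ℝ) (a b : E) :
    ‖(1 - t) • a + t • b‖ ^ 2
      = (1 - t) * ‖a‖ ^ 2 + t * ‖b‖ ^ 2 - t * (1 - t) * ‖a - b‖ ^ 2 := by
  have h : ∀ y : E, ‖y‖ ^ 2 = ⟪y, y⟫ := fun y => (real_inner_self_eq_norm_sq y).symm
  simp only [h, inner_add_left, inner_add_right, inner_sub_left, inner_sub_right,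
    real_inner_smul_left, real_inner_smul_right]
  rw [real_inner_comm b a]
  ring

lemma grad_sq (ρ : ℝ) (u : E) : HasGradientAt (fun w : E => ρ / 2 * ‖w‖ ^ 2) (ρ • u) u := by
  rw [hasGradientAt_iff_hasFDerivAt]
  have h1 : HasFDerivAt (fun w : E => ⟪w, w⟫)
      ((fderivInnerCLM ℝ (u, u)).comp ((ContinuousLinearMap.id ℝ E).prod (ContinuousLinearMap.id ℝ E))) u :=
    (hasFDerivAt_id u).inner ℝ (hasFDerivAt_id u)
  have hfun : (fun w : E => ρ / 2 * ‖w‖ ^ 2) = fun w : E => (ρ / 2) • ⟪w, w⟫ := by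
    funext w; simp [real_inner_self_eq_norm_sq, smul_eq_mul]
  rw [hfun]
  refine (h1.const_smul (ρ / 2)).congr_fderiv ?_
  ext y
  simp [real_inner_smul_left, real_inner_comm u y]
  ring

lemma grad_ineq_s4 {C : Set E} {φ : E → ℝ} (hconv : ConvexOn ℝ C φ)
    {a b : E} (ha : a ∈ C) (hb : b ∈ C) {p : E} (hd : HasGradientAt φ p a) :
    φ a + ⟪p, b - a⟫ ≤ φ b := by
  set F : ℝ → ℝ := fun t => φ (a + t • (b - a)) with hF
  have hline : HasDerivAt F ⟪p, b - a⟫ 0 := by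
    have h2 : HasDerivAt (fun t : ℝ => a + t • (b - a)) (b - a) 0 := by
      simpa using ((hasDerivAt_id (0:ℝ)).smul_const (b - a)).const_add a
    have h1 : HasFDerivAt φ ((InnerProductSpace.toDual ℝ E) p) ((fun t : ℝ => a + t • (b - a)) 0) := by
      simpa using hd.hasFDerivAt
    have := h1.comp_hasDerivAt 0 h2
    simp at this
    exact this
  have hslope : ∀ t ∈ Ioc (0:ℝ) 1, slope F 0 t ≤ φ b - φ a := by
    intro t ht
    have hcomb : a + t • (b - a) = (1 - t) • a + t • b := by
      rw [smul_sub, sub_smul, one_smul]; abel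
    have hFt : F t ≤ (1 - t) * φ a + t * φ b := by
      rw [hF]; simp only; rw [hcomb]
      exact hconv.2 ha hb (by linarith [ht.2]) (le_of_lt ht.1) (by ring)
    have hF0 : F 0 = φ a := by simp [hF]
    rw [slope_def_field, sub_zero, div_le_iff₀ ht.1]
    nlinarith [ht.1, ht.2]
  have tends : Tendsto (slope F 0) (𝓝[>] 0) (𝓝 ⟪p, b - a⟫) :=
    (hasDerivAt_iff_tendsto_slope.1 hline).mono_left
      (nhdsWithin_mono _ fun t ht => ne_of_gt ht)
  have hle : ⟪p, b - a⟫ ≤ φ b - φ a :=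
    le_of_tendsto tends (Filter.eventually_of_mem
      (Ioc_mem_nhdsGT zero_lt_one) hslope)
  linarith

end helpers

/-- One-step descent estimate for the HDCA-NI subproblem. -/
theorem stmt4 {n : ℕ} (C : Set (EuclideanSpace ℝ (Fin n)))
    (hCne : C.Nonempty) (hCcl : IsClosed C) (hCcv : Convex ℝ C)
    (g h : EuclideanSpace ℝ (Fin n) → ℝ)
    (g' h' : EuclideanSpace ℝ (Fin n) → EuclideanSpace ℝ (Fin n))
    (hg : ∀ u, HasGradientAt g (g' u) u) (hh : ∀ u, HasGradientAt h (h' u) u)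
    (ρg ρh : ℝ) (hρg : 0 ≤ ρg) (hρh : 0 ≤ ρh)
    (hgconv : ConvexOn ℝ C (fun u => g u - ρg / 2 * ‖u‖ ^ 2))
    (hhconv : ConvexOn ℝ C (fun u => h u - ρh / 2 * ‖u‖ ^ 2))
    (γ : ℝ) (hγ : 0 ≤ γ)
    (v x xm xp : EuclideanSpace ℝ (Fin n)) (hv : v ∈ C) (hxp : xp ∈ C)
    (hmin : ∀ u ∈ C,
      g xp - ⟪h' v + γ • (x - xm), xp⟫ ≤ g u - ⟪h' v + γ • (x - xm), u⟫) :
    (g xp - h xp) + (ρg + ρh - γ) / 2 * ‖v - xp‖ ^ 2 ≤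
      (g v - h v) + γ / 2 * ‖x - xm‖ ^ 2 := by
  set w : EuclideanSpace ℝ (Fin n) := h' v + γ • (x - xm) with hw
  -- Step A : gradient inequality for the ρh-convex part of h
  have hgradh : HasGradientAt (fun u : EuclideanSpace ℝ (Fin n) => h u - ρh / 2 * ‖u‖ ^ 2)
      (h' v - ρh • v) v := by
    rw [hasGradientAt_iff_hasFDerivAt]
    have := ((hh v).hasFDerivAt).sub ((grad_sq ρh v).hasFDerivAt)
    rw [map_sub]
    exact this
  have hA0 := grad_ineq_s4 hhconv hv hxp hgradh
  -- expand the inner product in hA0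
  have e2 : ⟪h' v - ρh • v, xp - v⟫ = ⟪h' v, xp - v⟫ - ρh * ⟪v, xp - v⟫ := by
    rw [inner_sub_left, real_inner_smul_left]
  have e3 : ‖xp - v‖ ^ 2 = ‖xp‖ ^ 2 - 2 * ⟪v, xp - v⟫ - ‖v‖ ^ 2 := by
    have hx : ∀ y : EuclideanSpace ℝ (Fin n), ‖y‖ ^ 2 = ⟪y, y⟫ :=
      fun y => (real_inner_self_eq_norm_sq y).symm
    simp only [hx, inner_sub_left, inner_sub_right]
    rw [real_inner_comm v xp]
    ring
  have hA : h v + ⟪h' v, xp - v⟫ + ρh / 2 * ‖xp - v‖ ^ 2 ≤ h xp := by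
    rw [e2] at hA0
    nlinarith [hA0, e3]
  -- Step B : strong-convexity descent at the minimizer
  have hlin : ConvexOn ℝ C (fun u : EuclideanSpace ℝ (Fin n) => -⟪w, u⟫) := by
    refine ⟨hCcv, fun u hu y hy a b ha hb hab => le_of_eq ?_⟩
    simp only [inner_add_right, real_inner_smul_right, smul_eq_mul]
    ring
  have hψ : ConvexOn ℝ C
      (fun u : EuclideanSpace ℝ (Fin n) => (g u - ⟪w, u⟫) - ρg / 2 * ‖u‖ ^ 2) := by
    have heq : (fun u : EuclideanSpace ℝ (Fin n) => (g u - ⟪w, u⟫) - ρg / 2 * ‖u‖ ^ 2)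
        = fun u => (g u - ρg / 2 * ‖u‖ ^ 2) + (-⟪w, u⟫) := by
      funext u; ring
    rw [heq]; exact hgconv.add hlin
  have key : ∀ t ∈ Ioc (0:ℝ) 1,
      ρg / 2 * (1 - t) * ‖v - xp‖ ^ 2 ≤ (g v - ⟪w, v⟫) - (g xp - ⟪w, xp⟫) := by
    intro t ht
    set z : EuclideanSpace ℝ (Fin n) := (1 - t) • xp + t • v with hz
    have hzC : z ∈ C := hCcv hxp hv (by linarith [ht.2]) (le_of_lt ht.1) (by ring)
    have hzc := hψ.2 hxp hv (by linarith [ht.2]) (le_of_lt ht.1) (by ring : (1-t) + t = 1)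
    simp only [smul_eq_mul] at hzc
    have hcombo := combo_norm_sq t xp v
    have hm := hmin z hzC
    rw [← hz] at hzc hcombo
    have hnr : ‖xp - v‖ = ‖v - xp‖ := norm_sub_rev xp v
    rw [hnr] at hcombo
    have h5 : t * (ρg / 2 * (1 - t) * ‖v - xp‖ ^ 2)
        ≤ t * ((g v - ⟪w, v⟫) - (g xp - ⟪w, xp⟫)) := by nlinarith [hm, hzc, hcombo]
    exact le_of_mul_le_mul_left h5 ht.1
  have tend : Tendsto (fun t : ℝ => ρg / 2 * (1 - t) * ‖v - xp‖ ^ 2) (𝓝[>] 0)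
      (𝓝 (ρg / 2 * ‖v - xp‖ ^ 2)) := by
    have hc : Continuous (fun t : ℝ => ρg / 2 * (1 - t) * ‖v - xp‖ ^ 2) := by fun_prop
    have := hc.tendsto 0
    simp only [sub_zero, mul_one] at this
    exact this.mono_left nhdsWithin_le_nhds
  have hB : ρg / 2 * ‖v - xp‖ ^ 2 ≤ (g v - ⟪w, v⟫) - (g xp - ⟪w, xp⟫) :=
    le_of_tendsto tend (Filter.eventually_of_mem
      (Ioc_mem_nhdsGT zero_lt_one) key)
  -- inner product bookkeeping
  have e1 : ⟪w, xp⟫ - ⟪w, v⟫ = ⟪h' v, xp - v⟫ + γ * ⟪x - xm, xp - v⟫ := by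
    simp only [hw, inner_add_left, real_inner_smul_left, inner_sub_right]
    ring
  -- Young's inequality
  have hY : γ * ⟪x - xm, xp - v⟫ ≤ γ / 2 * ‖x - xm‖ ^ 2 + γ / 2 * ‖xp - v‖ ^ 2 := by
    have h1 := real_inner_le_norm (x - xm) (xp - v)
    nlinarith [sq_nonneg (‖x - xm‖ - ‖xp - v‖), mul_le_mul_of_nonneg_left h1 hγ]
  have hnr : ‖xp - v‖ = ‖v - xp‖ := norm_sub_rev xp v
  rw [hnr] at hA hY
  linarith [hA, hB, hY, e1]
end
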